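/- For a König–Egerváry graph G, the following are equivalent: (i) some maximum independent set is contained in Shed(G); (ii) |Ω(G)| = 2^{α(G)}; (iii) Shed(G) = V(G); (iv) every maximum independent set is contained in Shed(G); (v) G is the disjoint union of α(G) copies of K₂. -/

import Mathlib

set_option linter.unusedSectionVars false
set_option maxHeartbeats 1000000


open SimpleGraph

variable {V : Type*} [Fintype V] [DecidableEq V]

/-- A set of vertices is independent: no two of its vertices are adjacent. -/
def isIndep (G : SimpleGraph V) (S : Finset V) : Prop :=
  ∀ ⦃a⦄, a ∈ S → ∀ ⦃b⦄, b ∈ S → ¬ G.Adj a b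

/-- The independence number `α(G)`. -/
noncomputable def indepNumF (G : SimpleGraph V) : ℕ :=
  sSup {n | ∃ S : Finset V, isIndep G S ∧ S.card = n}

/-- A maximum independent set: an independent set of size `α(G)`. -/
def isMaxIndep (G : SimpleGraph V) (S : Finset V) : Prop :=
  isIndep G S ∧ S.card = indepNumF G

/-- `G` has two disjoint maximum independent sets. -/
def hasTwoDisjointMaxIndep (G : SimpleGraph V) : Prop :=
  ∃ S₁ S₂ : Finset V, isMaxIndep G S₁ ∧ isMaxIndep G S₂ ∧ Disjoint S₁ S₂

/-- A matching: a set of edges of `G`, pairwise sharing no vertex. -/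
def isMatchingF (G : SimpleGraph V) (M : Finset (Sym2 V)) : Prop :=
  (∀ e ∈ M, e ∈ G.edgeSet) ∧
  (∀ e ∈ M, ∀ f ∈ M, e ≠ f → ∀ v : V, v ∈ e → v ∉ f)

/-- The matching number `μ(G)`. -/
noncomputable def matchNum (G : SimpleGraph V) : ℕ :=
  sSup {n | ∃ M : Finset (Sym2 V), isMatchingF G M ∧ M.card = n}

/-- A shedding vertex: for every independent set `S` of `G − N[v]` there is a
neighbor `u` of `v` with `S ∪ {u}` independent. -/
def IsShedding (G : SimpleGraph V) (v : V) : Prop :=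
  ∀ S : Finset V, isIndep G S → (∀ w ∈ S, w ≠ v ∧ ¬ G.Adj v w) →
    ∃ u, G.Adj v u ∧ isIndep G (insert u S)

/-- A perfect matching of `G`: a matching covering every vertex. -/
def hasPerfectMatchingF (G : SimpleGraph V) : Prop :=
  ∃ M : Finset (Sym2 V), isMatchingF G M ∧ ∀ v : V, ∃ e ∈ M, v ∈ e

/-- The disjoint union of `k` copies of `K₂`. -/
def copiesK2 (k : ℕ) : SimpleGraph (Fin k × Fin 2) :=
  SimpleGraph.fromRel (fun p q => p.1 = q.1)

open Finset

-- basic lemmas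
lemma isIndep_subset {G : SimpleGraph V} {S T : Finset V} (h : isIndep G T) (hST : S ⊆ T) :
    isIndep G S := fun _ ha _ hb => h (hST ha) (hST hb)

lemma indep_card_le (G : SimpleGraph V) {S : Finset V} (h : isIndep G S) :
    S.card ≤ indepNumF G := by
  have hb : BddAbove {n | ∃ S : Finset V, isIndep G S ∧ S.card = n} :=
    ⟨Fintype.card V, by rintro n ⟨T, -, rfl⟩; exact T.card_le_univ⟩
  exact le_csSup hb ⟨S, h, rfl⟩

lemma exists_maxIndep (G : SimpleGraph V) : ∃ S : Finset V, isMaxIndep G S := by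
  have h : indepNumF G ∈ {n | ∃ S : Finset V, isIndep G S ∧ S.card = n} := by
    have hne : {n | ∃ S : Finset V, isIndep G S ∧ S.card = n}.Nonempty :=
      ⟨0, ∅, by intro a ha; simp at ha, by simp⟩
    have hb : BddAbove {n | ∃ S : Finset V, isIndep G S ∧ S.card = n} :=
      ⟨Fintype.card V, by rintro n ⟨T, -, rfl⟩; exact T.card_le_univ⟩
    exact Nat.sSup_mem hne hb
  obtain ⟨S, hS, hc⟩ := h
  exact ⟨S, hS, hc⟩

lemma match_card_le (G : SimpleGraph V) {M : Finset (Sym2 V)} (h : isMatchingF G M) :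
    M.card ≤ matchNum G := by
  have hb : BddAbove {n | ∃ M : Finset (Sym2 V), isMatchingF G M ∧ M.card = n} :=
    ⟨Fintype.card (Sym2 V), by rintro n ⟨N, -, rfl⟩; exact N.card_le_univ⟩
  exact le_csSup hb ⟨M, h, rfl⟩

lemma exists_maxMatching (G : SimpleGraph V) :
    ∃ M : Finset (Sym2 V), isMatchingF G M ∧ M.card = matchNum G := by
  have h : matchNum G ∈ {n | ∃ M : Finset (Sym2 V), isMatchingF G M ∧ M.card = n} := by
    have hne : {n | ∃ M : Finset (Sym2 V), isMatchingF G M ∧ M.card = n}.Nonempty :=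
      ⟨0, ∅, ⟨by simp, by simp⟩, by simp⟩
    have hb : BddAbove {n | ∃ M : Finset (Sym2 V), isMatchingF G M ∧ M.card = n} :=
      ⟨Fintype.card (Sym2 V), by rintro n ⟨N, -, rfl⟩; exact N.card_le_univ⟩
    exact Nat.sSup_mem hne hb
  exact h

-- Sym2 inf/sup
def einf {W : Type*} [LinearOrder W] (e : Sym2 W) : W := Sym2.lift ⟨min, min_comm⟩ e
def esup {W : Type*} [LinearOrder W] (e : Sym2 W) : W := Sym2.lift ⟨max, max_comm⟩ e

@[simp] lemma einf_mk {W : Type*} [LinearOrder W] (a b : W) : einf s(a,b) = min a b := rfl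
@[simp] lemma esup_mk {W : Type*} [LinearOrder W] (a b : W) : esup s(a,b) = max a b := rfl

lemma mem_iff_einf_esup {W : Type*} [LinearOrder W] (e : Sym2 W) (v : W) :
    v ∈ e ↔ v = einf e ∨ v = esup e := by
  induction e using Sym2.ind with
  | _ a b =>
    simp only [Sym2.mem_iff, einf_mk, esup_mk]
    rcases le_total a b with h | h
    · rw [min_eq_left h, max_eq_right h]
    · rw [min_eq_right h, max_eq_left h, or_comm]

lemma einf_mem {W : Type*} [LinearOrder W] (e : Sym2 W) : einf e ∈ e :=
  (mem_iff_einf_esup e _).2 (Or.inl rfl)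

lemma esup_mem {W : Type*} [LinearOrder W] (e : Sym2 W) : esup e ∈ e :=
  (mem_iff_einf_esup e _).2 (Or.inr rfl)

lemma endpoints_cases {W : Type*} [LinearOrder W] {a b : W} {e : Sym2 W} (h : e = s(a,b)) :
    (a = einf e ∧ b = esup e) ∨ (a = esup e ∧ b = einf e) := by
  subst h
  simp only [einf_mk, esup_mk]
  rcases le_total a b with h | h
  · exact Or.inl ⟨(min_eq_left h).symm, (max_eq_right h).symm⟩
  · exact Or.inr ⟨(max_eq_left h).symm, (min_eq_right h).symm⟩

lemma adj_of_mem_mem {G : SimpleGraph V} {e : Sym2 V} (he : e ∈ G.edgeSet)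
    {x y : V} (hx : x ∈ e) (hy : y ∈ e) (hxy : x ≠ y) : G.Adj x y := by
  induction e using Sym2.ind with
  | _ a b =>
    rw [SimpleGraph.mem_edgeSet] at he
    rw [Sym2.mem_iff] at hx hy
    rcases hx with rfl | rfl <;> rcases hy with rfl | rfl
    · exact absurd rfl hxy
    · exact he
    · exact he.symm
    · exact absurd rfl hxy

lemma sym2_exists_eq {W : Type*} (e : Sym2 W) : ∃ a b : W, e = s(a,b) := by
  induction e using Sym2.ind with
  | _ a b => exact ⟨a, b, rfl⟩

-- König–Egerváry structure: each maximum-matching edge has exactly one endpoint in any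
-- maximum independent set, and the matching covers the complement of that set.
lemma KE_struct [LinearOrder V] {G : SimpleGraph V}
    (hKE : indepNumF G + matchNum G = Fintype.card V)
    {S : Finset V} (hS : isMaxIndep G S)
    {M : Finset (Sym2 V)} (hM : isMatchingF G M) (hMc : M.card = matchNum G) :
    (∀ e ∈ M, ∃ a b : V, a ∈ S ∧ b ∉ S ∧ e = s(a,b)) ∧
    (∀ v : V, v ∉ S → ∃ e ∈ M, v ∈ e) := by
  classical
  set T : Finset V := Finset.univ \ S with hT
  have hTcard : T.card = matchNum G := by
    rw [hT, Finset.card_sdiff_of_subset (Finset.subset_univ S), Finset.card_univ, hS.2]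
    omega
  -- no edge of M has both endpoints in S
  have hnotboth : ∀ e ∈ M, ¬ (einf e ∈ S ∧ esup e ∈ S) := by
    rintro e he ⟨h1, h2⟩
    have hne : einf e ≠ esup e := by
      intro hcontra
      obtain ⟨a, b, hab⟩ := sym2_exists_eq e
      have hadj : G.Adj a b := (SimpleGraph.mem_edgeSet G).1 (by rw [← hab]; exact hM.1 e he)
      rcases endpoints_cases hab with ⟨ha, hb⟩ | ⟨ha, hb⟩ <;>
        exact hadj.ne (by rw [ha, hb]; first | exact hcontra | exact hcontra.symm)
    exact hS.1 h1 h2 (adj_of_mem_mem (hM.1 e he) (einf_mem e) (esup_mem e) hne)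
  -- the endpoint-outside-S map
  set g : Sym2 V → V := fun e => if einf e ∈ S then esup e else einf e with hg
  have hgmem : ∀ e : Sym2 V, g e ∈ e := by
    intro e; rw [hg]; dsimp only
    split
    · exact esup_mem e
    · exact einf_mem e
  have hgT : ∀ e ∈ M, g e ∈ T := by
    intro e he
    rw [hT, Finset.mem_sdiff]
    refine ⟨Finset.mem_univ _, ?_⟩
    rw [hg]; dsimp only
    split
    · intro h2; exact hnotboth e he ⟨by assumption, h2⟩
    · assumption
  have hginj : Set.InjOn g M := by
    intro e he e' he' heq
    by_contra hne
    exact hM.2 e he e' he' hne (g e) (hgmem e) (heq ▸ hgmem e')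
  have himg : M.image g = T := by
    apply Finset.eq_of_subset_of_card_le
    · intro v hv
      obtain ⟨e, he, rfl⟩ := Finset.mem_image.1 hv
      exact hgT e he
    · rw [Finset.card_image_of_injOn hginj, hMc, hTcard]
  have hcover : ∀ v : V, v ∉ S → ∃ e ∈ M, v ∈ e := by
    intro v hv
    have : v ∈ T := by rw [hT, Finset.mem_sdiff]; exact ⟨Finset.mem_univ _, hv⟩
    rw [← himg] at this
    obtain ⟨e, he, hge⟩ := Finset.mem_image.1 this
    exact ⟨e, he, hge ▸ hgmem e⟩
  refine ⟨?_, hcover⟩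
  intro e he
  -- exactly one endpoint in S
  have hone : einf e ∈ S ∨ esup e ∈ S := by
    by_contra hcon
    push_neg at hcon
    -- both endpoints outside S; the one that is not g e is also in T = image g
    have hne : einf e ≠ esup e := by
      intro hcontra
      obtain ⟨a, b, hab⟩ := sym2_exists_eq e
      have hadj : G.Adj a b := (SimpleGraph.mem_edgeSet G).1 (by rw [← hab]; exact hM.1 e he)
      rcases endpoints_cases hab with ⟨ha, hb⟩ | ⟨ha, hb⟩ <;>
        exact hadj.ne (by rw [ha, hb]; first | exact hcontra | exact hcontra.symm)
    have hginfe : g e = einf e := by rw [hg]; dsimp only; rw [if_neg hcon.1]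
    have : esup e ∈ T := by rw [hT, Finset.mem_sdiff]; exact ⟨Finset.mem_univ _, hcon.2⟩
    rw [← himg] at this
    obtain ⟨e', he', hge'⟩ := Finset.mem_image.1 this
    have : e' = e := by
      by_contra hne'
      exact hM.2 e' he' e he hne' (g e') (hgmem e') (hge' ▸ esup_mem e)
    rw [this, hginfe] at hge'
    exact hne hge'
  have hnb := hnotboth e he
  have hemk : e = s(einf e, esup e) := by
    obtain ⟨a, b, hab⟩ := sym2_exists_eq e
    rcases endpoints_cases hab with ⟨ha, hb⟩ | ⟨ha, hb⟩
    · rw [← ha, ← hb]; exact hab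
    · rw [← ha, ← hb]; rw [hab]; exact Sym2.eq_swap
  rcases hone with h | h
  · exact ⟨einf e, esup e, h, fun h2 => hnb ⟨h, h2⟩, hemk⟩
  · refine ⟨esup e, einf e, h, fun h2 => hnb ⟨h2, h⟩, ?_⟩
    conv_lhs => rw [hemk]
    exact Sym2.eq_swap

lemma matchNum_le_indepNum [LinearOrder V] {G : SimpleGraph V}
    (hKE : indepNumF G + matchNum G = Fintype.card V) :
    matchNum G ≤ indepNumF G := by
  classical
  obtain ⟨S, hS⟩ := exists_maxIndep G
  obtain ⟨M, hM, hMc⟩ := exists_maxMatching G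
  obtain ⟨hone, -⟩ := KE_struct hKE hS hM hMc
  set gS : Sym2 V → V := fun e => if einf e ∈ S then einf e else esup e with hgS
  have hmem : ∀ e : Sym2 V, gS e ∈ e := by
    intro e; rw [hgS]; dsimp only
    split
    · exact einf_mem e
    · exact esup_mem e
  have hinS : ∀ e ∈ M, gS e ∈ S := by
    intro e he
    obtain ⟨a, b, ha, hb, hab⟩ := hone e he
    rw [hgS]; dsimp only
    rcases endpoints_cases hab with ⟨h1, h2⟩ | ⟨h1, h2⟩
    · rw [if_pos (h1 ▸ ha)]; exact h1 ▸ ha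
    · rw [if_neg (h2 ▸ hb)]; exact h1 ▸ ha
  have hinj : Set.InjOn gS M := by
    intro e he e' he' heq
    by_contra hne
    exact hM.2 e he e' he' hne (gS e) (hmem e) (heq ▸ hmem e')
  calc matchNum G = M.card := hMc.symm
    _ = (M.image gS).card := (Finset.card_image_of_injOn hinj).symm
    _ ≤ S.card := Finset.card_le_card (by
        intro v hv
        obtain ⟨e, he, rfl⟩ := Finset.mem_image.1 hv
        exact hinS e he)
    _ = indepNumF G := hS.2

section UniqueNbr

variable {G : SimpleGraph V} {f : V → V}

lemma hff (hf1 : ∀ v, G.Adj v (f v)) (hf2 : ∀ v w, G.Adj v w → w = f v) (v : V) :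
    f (f v) = v := (hf2 (f v) v (hf1 v).symm).symm

lemma f_inj (hf1 : ∀ v, G.Adj v (f v)) (hf2 : ∀ v w, G.Adj v w → w = f v) :
    Function.Injective f := by
  intro a b h
  have := hff hf1 hf2 a
  rw [h, hff hf1 hf2 b] at this
  exact this.symm

lemma shed_of_uniqueNbr (hf1 : ∀ v, G.Adj v (f v)) (hf2 : ∀ v w, G.Adj v w → w = f v)
    (v : V) : IsShedding G v := by
  intro S hS hfar
  refine ⟨f v, hf1 v, ?_⟩
  intro a ha b hb hadj
  rw [Finset.mem_insert] at ha hb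
  rcases ha with rfl | ha <;> rcases hb with rfl | hb
  · exact G.irrefl hadj
  · have : b = f (f v) := hf2 (f v) b hadj
    rw [hff hf1 hf2 v] at this
    exact (hfar b hb).1 this
  · have : a = f (f v) := hf2 (f v) a hadj.symm
    rw [hff hf1 hf2 v] at this
    exact (hfar a ha).1 this
  · exact hS ha hb hadj

variable {R : Finset V}

lemma mem_R_of_not (hR : ∀ v, v ∈ R ↔ f v ∉ R) {v : V} (hv : v ∉ R) : f v ∈ R := by
  by_contra h
  exact hv ((hR v).2 h)

lemma fR_not_mem (hR : ∀ v, v ∈ R ↔ f v ∉ R) {v : V} (hv : v ∈ R) : f v ∉ R := (hR v).1 hv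

/-- the representative of the pair of `v` -/
def rep (f : V → V) (R : Finset V) (v : V) : V := if v ∈ R then v else f v

lemma rep_mem (hR : ∀ v, v ∈ R ↔ f v ∉ R) (v : V) : rep f R v ∈ R := by
  unfold rep; split
  · assumption
  · exact mem_R_of_not hR (by assumption)

lemma adj_iff_rep (hf1 : ∀ v, G.Adj v (f v)) (hf2 : ∀ v w, G.Adj v w → w = f v)
    (hR : ∀ v, v ∈ R ↔ f v ∉ R) (v w : V) :
    G.Adj v w ↔ v ≠ w ∧ rep f R v = rep f R w := by
  constructor
  · intro h
    have hw : w = f v := hf2 v w h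
    refine ⟨h.ne, ?_⟩
    subst hw
    unfold rep
    by_cases hv : v ∈ R
    · rw [if_pos hv, if_neg (fR_not_mem hR hv), hff hf1 hf2]
    · rw [if_neg hv, if_pos (mem_R_of_not hR hv)]
  · rintro ⟨hne, hrep⟩
    unfold rep at hrep
    by_cases hv : v ∈ R <;> by_cases hw : w ∈ R
    · rw [if_pos hv, if_pos hw] at hrep; exact absurd hrep hne
    · rw [if_pos hv, if_neg hw] at hrep
      have : G.Adj w (f w) := hf1 w
      rw [← hrep] at this
      exact this.symm
    · rw [if_neg hv, if_pos hw] at hrep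
      have : G.Adj v (f v) := hf1 v
      rw [hrep] at this
      exact this
    · rw [if_neg hv, if_neg hw] at hrep
      exact absurd (f_inj hf1 hf2 hrep) hne

lemma indep_R (hf1 : ∀ v, G.Adj v (f v)) (hf2 : ∀ v w, G.Adj v w → w = f v)
    (hR : ∀ v, v ∈ R ↔ f v ∉ R) : isIndep G R := by
  intro a ha b hb hadj
  have : b = f a := hf2 a b hadj
  exact fR_not_mem hR ha (this ▸ hb)

lemma indep_card_le_R (hf1 : ∀ v, G.Adj v (f v)) (hf2 : ∀ v w, G.Adj v w → w = f v)
    (hR : ∀ v, v ∈ R ↔ f v ∉ R) {S : Finset V} (hS : isIndep G S) : S.card ≤ R.card := by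
  have hinj : Set.InjOn (rep f R) S := by
    intro a ha b hb h
    by_contra hne
    exact hS ha hb ((adj_iff_rep hf1 hf2 hR a b).2 ⟨hne, h⟩)
  calc S.card = (S.image (rep f R)).card := (Finset.card_image_of_injOn hinj).symm
    _ ≤ R.card := Finset.card_le_card (by
        intro v hv
        obtain ⟨a, -, rfl⟩ := Finset.mem_image.1 hv
        exact rep_mem hR a)

lemma indepNum_eq_R (hf1 : ∀ v, G.Adj v (f v)) (hf2 : ∀ v w, G.Adj v w → w = f v)
    (hR : ∀ v, v ∈ R ↔ f v ∉ R) : indepNumF G = R.card := by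
  apply le_antisymm
  · obtain ⟨S, hS⟩ := exists_maxIndep G
    rw [← hS.2]
    exact indep_card_le_R hf1 hf2 hR hS.1
  · exact indep_card_le (G := G) (indep_R hf1 hf2 hR)

lemma image_rep_eq (hf1 : ∀ v, G.Adj v (f v)) (hf2 : ∀ v w, G.Adj v w → w = f v)
    (hR : ∀ v, v ∈ R ↔ f v ∉ R) {S : Finset V} (hS : isMaxIndep G S) :
    S.image (rep f R) = R := by
  have hinj : Set.InjOn (rep f R) S := by
    intro a ha b hb h
    by_contra hne
    exact hS.1 ha hb ((adj_iff_rep hf1 hf2 hR a b).2 ⟨hne, h⟩)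
  apply Finset.eq_of_subset_of_card_le
  · intro v hv
    obtain ⟨a, -, rfl⟩ := Finset.mem_image.1 hv
    exact rep_mem hR a
  · rw [Finset.card_image_of_injOn hinj, hS.2, indepNum_eq_R hf1 hf2 hR]

end UniqueNbr

section Counting

variable {G : SimpleGraph V} {f : V → V} {R : Finset V}

/-- The maximum independent set determined by a choice `A ⊆ R`. -/
def Phi (f : V → V) (R : Finset V) (A : Finset V) : Finset V := A ∪ (R \ A).image f

lemma mem_Phi_not_f (hf1 : ∀ v, G.Adj v (f v)) (hf2 : ∀ v w, G.Adj v w → w = f v)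
    (hR : ∀ v, v ∈ R ↔ f v ∉ R) {A : Finset V} (hA : A ⊆ R) {x : V}
    (hx : x ∈ Phi f R A) : f x ∉ Phi f R A := by
  intro hfx
  rw [Phi, Finset.mem_union] at hx hfx
  rcases hx with hx | hx <;> rcases hfx with hfx | hfx
  · exact fR_not_mem hR (hA hx) (hA hfx)
  · obtain ⟨r, hr, hrf⟩ := Finset.mem_image.1 hfx
    have : r = x := f_inj hf1 hf2 hrf
    subst this
    exact (Finset.mem_sdiff.1 hr).2 hx
  · obtain ⟨r, hr, hrf⟩ := Finset.mem_image.1 hx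
    have hfr : f x = r := by rw [← hrf, hff hf1 hf2]
    rw [hfr] at hfx
    exact (Finset.mem_sdiff.1 hr).2 hfx
  · obtain ⟨r, hr, hrf⟩ := Finset.mem_image.1 hx
    obtain ⟨r', hr', hrf'⟩ := Finset.mem_image.1 hfx
    have hfr : f x = r := by rw [← hrf, hff hf1 hf2]
    rw [← hrf'] at hfr
    have : f r' ∉ R := fR_not_mem hR (Finset.mem_sdiff.1 hr').1
    rw [hfr] at this
    exact this (Finset.mem_sdiff.1 hr).1

lemma Phi_maxIndep (hf1 : ∀ v, G.Adj v (f v)) (hf2 : ∀ v w, G.Adj v w → w = f v)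
    (hR : ∀ v, v ∈ R ↔ f v ∉ R) {A : Finset V} (hA : A ⊆ R) :
    isMaxIndep G (Phi f R A) := by
  constructor
  · intro a ha b hb hadj
    have : b = f a := hf2 a b hadj
    exact mem_Phi_not_f hf1 hf2 hR hA ha (this ▸ hb)
  · have hdisj : Disjoint A ((R \ A).image f) := by
      rw [Finset.disjoint_right]
      intro x hx hxA
      obtain ⟨r, hr, rfl⟩ := Finset.mem_image.1 hx
      exact fR_not_mem hR (Finset.mem_sdiff.1 hr).1 (hA hxA)
    rw [Phi, Finset.card_union_of_disjoint hdisj,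
      Finset.card_image_of_injective _ (f_inj hf1 hf2),
      Finset.card_sdiff_of_subset hA, indepNum_eq_R hf1 hf2 hR]
    have := Finset.card_le_card hA
    omega

lemma Phi_inter (hR : ∀ v, v ∈ R ↔ f v ∉ R) {A : Finset V} (hA : A ⊆ R) :
    Phi f R A ∩ R = A := by
  ext x
  simp only [Finset.mem_inter, Phi, Finset.mem_union]
  constructor
  · rintro ⟨hx | hx, hxR⟩
    · exact hx
    · obtain ⟨r, hr, rfl⟩ := Finset.mem_image.1 hx
      exact absurd hxR (fR_not_mem hR (Finset.mem_sdiff.1 hr).1)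
  · intro hx
    exact ⟨Or.inl hx, hA hx⟩

lemma maxIndep_eq_Phi (hf1 : ∀ v, G.Adj v (f v)) (hf2 : ∀ v w, G.Adj v w → w = f v)
    (hR : ∀ v, v ∈ R ↔ f v ∉ R) {S : Finset V} (hS : isMaxIndep G S) :
    S = Phi f R (S ∩ R) := by
  have himg := image_rep_eq hf1 hf2 hR hS
  apply Finset.Subset.antisymm
  · intro v hv
    rw [Phi, Finset.mem_union]
    by_cases hvR : v ∈ R
    · exact Or.inl (Finset.mem_inter.2 ⟨hv, hvR⟩)
    · refine Or.inr (Finset.mem_image.2 ⟨f v, ?_, hff hf1 hf2 v⟩)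
      rw [Finset.mem_sdiff]
      refine ⟨mem_R_of_not hR hvR, ?_⟩
      intro hmem
      have hfvS : f v ∈ S := (Finset.mem_inter.1 hmem).1
      exact hS.1 hv hfvS (hf1 v)
  · intro x hx
    rw [Phi, Finset.mem_union] at hx
    rcases hx with hx | hx
    · exact (Finset.mem_inter.1 hx).1
    · obtain ⟨r, hr, rfl⟩ := Finset.mem_image.1 hx
      rw [Finset.mem_sdiff] at hr
      have hrS : r ∉ S := by
        intro hrS
        exact hr.2 (Finset.mem_inter.2 ⟨hrS, hr.1⟩)
      have : r ∈ S.image (rep f R) := by rw [himg]; exact hr.1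
      obtain ⟨s, hs, hsr⟩ := Finset.mem_image.1 this
      unfold rep at hsr
      by_cases hsR : s ∈ R
      · rw [if_pos hsR] at hsr; exact absurd (hsr ▸ hs) hrS
      · rw [if_neg hsR] at hsr
        have : f r = s := by rw [← hsr, hff hf1 hf2]
        rwa [this]

lemma ncard_maxIndep (hf1 : ∀ v, G.Adj v (f v)) (hf2 : ∀ v w, G.Adj v w → w = f v)
    (hR : ∀ v, v ∈ R ↔ f v ∉ R) :
    {S : Finset V | isMaxIndep G S}.ncard = 2 ^ indepNumF G := by
  have hset : {S : Finset V | isMaxIndep G S} = ↑(R.powerset.image (Phi f R)) := by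
    ext S
    simp only [Set.mem_setOf_eq, Finset.coe_image, Set.mem_image, Finset.mem_coe,
      Finset.mem_powerset]
    constructor
    · intro hS
      exact ⟨S ∩ R, Finset.inter_subset_right, (maxIndep_eq_Phi hf1 hf2 hR hS).symm⟩
    · rintro ⟨A, hA, rfl⟩
      exact Phi_maxIndep hf1 hf2 hR hA
  have hinjPhi : Set.InjOn (Phi f R) ↑R.powerset := by
    intro A hA B hB h
    rw [Finset.mem_coe, Finset.mem_powerset] at hA hB
    rw [← Phi_inter (f := f) hR hA, ← Phi_inter (f := f) hR hB, h]
  rw [hset, Set.ncard_coe_finset, Finset.card_image_of_injOn hinjPhi,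
    Finset.card_powerset, indepNum_eq_R hf1 hf2 hR]

end Counting

section Iso

variable {G : SimpleGraph V} {f : V → V} {R : Finset V}

lemma copiesK2_adj {k : ℕ} (p q : Fin k × Fin 2) :
    (copiesK2 k).Adj p q ↔ p ≠ q ∧ p.1 = q.1 := by
  rw [copiesK2, SimpleGraph.fromRel_adj]
  constructor
  · rintro ⟨hne, h | h⟩
    · exact ⟨hne, h⟩
    · exact ⟨hne, h.symm⟩
  · rintro ⟨hne, h⟩
    exact ⟨hne, Or.inl h⟩

noncomputable def pairEquiv (hf1 : ∀ v, G.Adj v (f v)) (hf2 : ∀ v w, G.Adj v w → w = f v)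
    (hR : ∀ v, v ∈ R ↔ f v ∉ R) : V ≃ (↥R × Fin 2) where
  toFun v := (⟨rep f R v, rep_mem hR v⟩, if v ∈ R then 0 else 1)
  invFun p := if p.2 = 0 then (p.1 : V) else f (p.1 : V)
  left_inv v := by
    by_cases hv : v ∈ R
    · simp [rep, hv]
    · simp [rep, hv, hff hf1 hf2 v]
  right_inv p := by
    obtain ⟨⟨r, hr⟩, j⟩ := p
    fin_cases j
    · simp only [if_pos rfl]
      have : rep f R r = r := by rw [rep, if_pos hr]
      simp [this, hr]
    · norm_num
      have h1 : f r ∉ R := fR_not_mem hR hr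
      have h2 : rep f R (f r) = r := by rw [rep, if_neg h1, hff hf1 hf2]
      simp [h1, h2]

noncomputable def isoCopies (hf1 : ∀ v, G.Adj v (f v)) (hf2 : ∀ v w, G.Adj v w → w = f v)
    (hR : ∀ v, v ∈ R ↔ f v ∉ R) : G ≃g copiesK2 R.card := by
  refine ⟨(pairEquiv hf1 hf2 hR).trans
    (Equiv.prodCongr (Fintype.equivFinOfCardEq (Fintype.card_coe R)) (Equiv.refl (Fin 2))), ?_⟩
  intro v w
  rw [copiesK2_adj, adj_iff_rep hf1 hf2 hR]
  set φ := (pairEquiv hf1 hf2 hR).trans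
    (Equiv.prodCongr (Fintype.equivFinOfCardEq (Fintype.card_coe R)) (Equiv.refl (Fin 2)))
  constructor
  · rintro ⟨hne, h1⟩
    refine ⟨fun hc => hne (by rw [hc]), ?_⟩
    have := (Fintype.equivFinOfCardEq (Fintype.card_coe R)).injective h1
    have := congrArg Subtype.val this
    exact this
  · rintro ⟨hne, h⟩
    refine ⟨fun hc => hne (φ.injective hc), ?_⟩
    show (Fintype.equivFinOfCardEq (Fintype.card_coe R)) ⟨rep f R v, _⟩ =
      (Fintype.equivFinOfCardEq (Fintype.card_coe R)) ⟨rep f R w, _⟩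
    congr 1
    exact Subtype.ext h

lemma uniqueNbr_of_iso {k : ℕ} (ψ : G ≃g copiesK2 k) (v : V) : ∃! u, G.Adj v u := by
  have key : ∀ j : Fin 2, ∃! j' : Fin 2, j' ≠ j := by
    intro j
    fin_cases j
    · exact ⟨1, by decide, by decide⟩
    · exact ⟨0, by decide, by decide⟩
  obtain ⟨j', hj', huniq⟩ := key (ψ v).2
  refine ⟨ψ.symm ((ψ v).1, j'), ?_, ?_⟩
  · show G.Adj v (ψ.symm ((ψ v).1, j'))
    rw [← ψ.map_adj_iff]
    rw [RelIso.apply_symm_apply]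
    rw [copiesK2_adj]
    refine ⟨?_, rfl⟩
    intro hc
    exact hj' (congrArg Prod.snd hc.symm)
  · intro w hw
    rw [← ψ.map_adj_iff, copiesK2_adj] at hw
    obtain ⟨hne, h1⟩ := hw
    have h2 : (ψ w).2 ≠ (ψ v).2 := by
      intro hc
      exact hne (Prod.ext h1 hc.symm)
    have := huniq (ψ w).2 h2
    have hψw : ψ w = ((ψ v).1, j') := Prod.ext h1.symm this
    calc w = ψ.symm (ψ w) := (ψ.symm_apply_apply w).symm
      _ = ψ.symm ((ψ v).1, j') := by rw [hψw]
  
lemma uniqueNbr_setup (hU : ∀ v : V, ∃! u, G.Adj v u) :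
    ∃ (f : V → V) (R : Finset V), (∀ v, G.Adj v (f v)) ∧ (∀ v w, G.Adj v w → w = f v) ∧
      (∀ v, v ∈ R ↔ f v ∉ R) := by
  classical
  choose f hf1 using fun v => (hU v).exists
  have hf2 : ∀ v w, G.Adj v w → w = f v := fun v w hw => (hU v).unique hw (hf1 v)
  set ι := Fintype.equivFin V with hι
  refine ⟨f, Finset.univ.filter (fun v => ι v < ι (f v)), hf1, hf2, ?_⟩
  intro v
  simp only [Finset.mem_filter, Finset.mem_univ, true_and, not_lt]
  rw [hff hf1 hf2 v]
  constructor
  · intro h; exact le_of_lt h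
  · intro h
    rcases lt_or_eq_of_le h with h' | h'
    · exact h'
    · exfalso
      have hv : v = f v := ι.injective h'
      have hadj := hf1 v
      rw [← hv] at hadj
      exact G.irrefl hadj

end Iso

lemma uniqueNbr_of_shedMaxIndep [LinearOrder V] {G : SimpleGraph V}
    (hKE : indepNumF G + matchNum G = Fintype.card V)
    {S : Finset V} (hS : isMaxIndep G S) (hshed : ∀ v ∈ S, IsShedding G v) :
    ∀ v : V, ∃! u, G.Adj v u := by
  classical
  have hmain : ∀ v : V, ∃ u, v ∈ S → G.Adj v u ∧ isIndep G (insert u (S.erase v)) := by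
    intro v
    by_cases hv : v ∈ S
    · obtain ⟨u, hu1, hu2⟩ := hshed v hv (S.erase v)
        (isIndep_subset hS.1 (Finset.erase_subset _ _))
        (by
          intro w hw
          rw [Finset.mem_erase] at hw
          exact ⟨hw.1, hS.1 hv hw.2⟩)
      exact ⟨u, fun _ => ⟨hu1, hu2⟩⟩
    · exact ⟨v, fun h => absurd h hv⟩
  choose u hu using hmain
  have hadju : ∀ v ∈ S, G.Adj v (u v) := fun v hv => (hu v hv).1
  have hpriv : ∀ v ∈ S, ∀ w ∈ S, w ≠ v → ¬ G.Adj (u v) w := by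
    intro v hv w hw hne hadj
    exact (hu v hv).2 (Finset.mem_insert_self _ _)
      (Finset.mem_insert_of_mem (Finset.mem_erase.2 ⟨hne, hw⟩)) hadj
  have hunotS : ∀ v ∈ S, u v ∉ S := by
    intro v hv hmem
    exact hS.1 hv hmem (hadju v hv)
  have huinj : Set.InjOn u S := by
    intro v hv w hw heq
    by_contra hne
    exact hpriv v hv w hw (Ne.symm hne) (heq ▸ (hadju w hw).symm)
  -- the image of u is exactly the complement of S
  have hcards : S.card = (Finset.univ \ S).card := by
    rw [Finset.card_sdiff_of_subset (Finset.subset_univ S), Finset.card_univ, hS.2]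
    have h1 : matchNum G ≤ indepNumF G := matchNum_le_indepNum hKE
    have h2 : indepNumF G ≤ (Finset.univ \ S).card := by
      calc indepNumF G = S.card := hS.2.symm
        _ = (S.image u).card := (Finset.card_image_of_injOn huinj).symm
        _ ≤ (Finset.univ \ S).card := Finset.card_le_card (by
            intro x hx
            obtain ⟨v, hv, rfl⟩ := Finset.mem_image.1 hx
            rw [Finset.mem_sdiff]
            exact ⟨Finset.mem_univ _, hunotS v hv⟩)
    rw [Finset.card_sdiff_of_subset (Finset.subset_univ S), Finset.card_univ, hS.2] at h2
    omega
  have himg : S.image u = Finset.univ \ S := by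
    apply Finset.eq_of_subset_of_card_le
    · intro x hx
      obtain ⟨v, hv, rfl⟩ := Finset.mem_image.1 hx
      rw [Finset.mem_sdiff]
      exact ⟨Finset.mem_univ _, hunotS v hv⟩
    · rw [Finset.card_image_of_injOn huinj, ← hcards]
  have hout : ∀ w : V, w ∉ S → ∃ x ∈ S, w = u x := by
    intro w hw
    have : w ∈ S.image u := by
      rw [himg, Finset.mem_sdiff]; exact ⟨Finset.mem_univ _, hw⟩
    obtain ⟨x, hx, hxw⟩ := Finset.mem_image.1 this
    exact ⟨x, hx, hxw.symm⟩
  -- a neighbor of v ∈ S outside S must be u v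
  have hnbr : ∀ v ∈ S, ∀ w, G.Adj v w → w = u v := by
    intro v hv w hadj
    have hwS : w ∉ S := fun hmem => hS.1 hv hmem hadj
    obtain ⟨x, hx, rfl⟩ := hout w hwS
    by_contra hne
    have hxv : x ≠ v := fun h => hne (by rw [h])
    exact hpriv x hx v hv (fun h => hxv h.symm) hadj.symm
  -- no edges between two `u`-vertices
  have hcross : ∀ v ∈ S, ∀ x ∈ S, x ≠ v → ¬ G.Adj (u v) (u x) := by
    intro v hv x hx hxv hadj
    obtain ⟨u', hadj', hind'⟩ := hshed v hv (insert (u x) ((S.erase v).erase x))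
      (isIndep_subset (hu x hx).2 (Finset.insert_subset_insert _
        (Finset.erase_subset_erase _ (Finset.erase_subset _ _))))
      (by
        intro w hw
        rw [Finset.mem_insert] at hw
        rcases hw with rfl | hw
        · refine ⟨fun h => hunotS x hx (h ▸ hv), ?_⟩
          intro hadj2
          exact hpriv x hx v hv (Ne.symm hxv) hadj2.symm
        · rw [Finset.mem_erase, Finset.mem_erase] at hw
          exact ⟨hw.2.1, hS.1 hv hw.2.2⟩)
    have hu'v : u' = u v := hnbr v hv u' hadj'
    subst hu'v
    exact hind' (Finset.mem_insert_self _ _)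
      (Finset.mem_insert_of_mem (Finset.mem_insert_self _ _)) hadj
  -- conclude
  intro v
  by_cases hv : v ∈ S
  · exact ⟨u v, hadju v hv, fun w hw => hnbr v hv w hw⟩
  · obtain ⟨x, hx, rfl⟩ := hout v hv
    refine ⟨x, (hadju x hx).symm, ?_⟩
    intro w hw
    by_cases hwS : w ∈ S
    · by_contra hne
      exact hpriv x hx w hwS hne hw
    · obtain ⟨y, hy, rfl⟩ := hout w hwS
      by_cases hyx : y = x
      · subst hyx
        exact absurd hw (G.irrefl)
      · exact absurd hw (hcross x hx y hy hyx)

lemma einf_ne_esup_of_edge [LinearOrder V] {G : SimpleGraph V} {e : Sym2 V}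
    (he : e ∈ G.edgeSet) : einf e ≠ esup e := by
  intro hcontra
  obtain ⟨a, b, hab⟩ := sym2_exists_eq e
  have hadj : G.Adj a b := (SimpleGraph.mem_edgeSet G).1 (hab ▸ he)
  rcases endpoints_cases hab with ⟨ha, hb⟩ | ⟨ha, hb⟩ <;>
    exact hadj.ne (by rw [ha, hb]; first | exact hcontra | exact hcontra.symm)

lemma uniqueNbr_of_count [LinearOrder V] {G : SimpleGraph V}
    (hKE : indepNumF G + matchNum G = Fintype.card V)
    (hcount : {S : Finset V | isMaxIndep G S}.ncard = 2 ^ indepNumF G) :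
    ∀ v : V, ∃! u, G.Adj v u := by
  classical
  obtain ⟨M, hM, hMc⟩ := exists_maxMatching G
  set Ω : Finset (Finset V) := Finset.univ.filter (fun S => isMaxIndep G S) with hΩdef
  have hΩ : {S : Finset V | isMaxIndep G S} = ↑Ω := by
    ext S; simp [hΩdef]
  have hΩcard : Ω.card = 2 ^ indepNumF G := by
    rw [← hcount, hΩ, Set.ncard_coe_finset]
  have hmemΩ : ∀ S : Finset V, S ∈ Ω ↔ isMaxIndep G S := by
    intro S; simp [hΩdef]
  -- exactly one endpoint of each matching edge in any maximum independent set
  have hone : ∀ S : Finset V, isMaxIndep G S → ∀ e ∈ M,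
      (einf e ∈ S ∧ esup e ∉ S) ∨ (einf e ∉ S ∧ esup e ∈ S) := by
    intro S hSmax e he
    obtain ⟨a, b, ha, hb, hab⟩ := (KE_struct hKE hSmax hM hMc).1 e he
    rcases endpoints_cases hab with ⟨h1, h2⟩ | ⟨h1, h2⟩
    · exact Or.inl ⟨h1 ▸ ha, h2 ▸ hb⟩
    · exact Or.inr ⟨h2 ▸ hb, h1 ▸ ha⟩
  have hcov : ∀ S : Finset V, isMaxIndep G S → ∀ v, v ∉ S → ∃ e ∈ M, v ∈ e :=
    fun S hSmax => (KE_struct hKE hSmax hM hMc).2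
  set Ψ : Finset V → Finset (Sym2 V) := fun S => M.filter (fun e => einf e ∈ S) with hΨdef
  have hΨsub : ∀ S S' : Finset V, isMaxIndep G S → isMaxIndep G S' → Ψ S = Ψ S' → S ⊆ S' := by
    intro S S' hSm hSm' heq v hv
    by_cases hcovv : ∃ e ∈ M, v ∈ e
    · obtain ⟨e, he, hve⟩ := hcovv
      rcases hone S hSm e he with ⟨h1, h2⟩ | ⟨h1, h2⟩
      · have hvinf : v = einf e := by
          rcases (mem_iff_einf_esup e v).1 hve with h | h
          · exact h
          · exact absurd (h ▸ hv) h2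
        have heΨ : e ∈ Ψ S := Finset.mem_filter.2 ⟨he, h1⟩
        rw [heq] at heΨ
        exact hvinf ▸ (Finset.mem_filter.1 heΨ).2
      · have hvsup : v = esup e := by
          rcases (mem_iff_einf_esup e v).1 hve with h | h
          · exact absurd (h ▸ hv) h1
          · exact h
        have heΨ : e ∉ Ψ S := fun hmem => h1 (Finset.mem_filter.1 hmem).2
        rw [heq] at heΨ
        have hinf' : einf e ∉ S' := fun hmem => heΨ (Finset.mem_filter.2 ⟨he, hmem⟩)
        rcases hone S' hSm' e he with ⟨h1', -⟩ | ⟨-, h2'⟩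
        · exact absurd h1' hinf'
        · exact hvsup ▸ h2'
    · by_contra hvS'
      exact hcovv (hcov S' hSm' v hvS')
  have hΨinj : Set.InjOn Ψ ↑Ω := by
    intro S hSm S' hSm' heq
    rw [Finset.mem_coe, hmemΩ] at hSm hSm'
    exact Finset.Subset.antisymm (hΨsub S S' hSm hSm' heq) (hΨsub S' S hSm' hSm heq.symm)
  have hΨpow : Ω.image Ψ ⊆ M.powerset := by
    intro B hB
    obtain ⟨S, hSm, rfl⟩ := Finset.mem_image.1 hB
    exact Finset.mem_powerset.2 (Finset.filter_subset _ _)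
  -- μ = α
  have hle : indepNumF G ≤ matchNum G := by
    have h1 : (2:ℕ) ^ indepNumF G ≤ 2 ^ M.card := by
      calc (2:ℕ) ^ indepNumF G = Ω.card := hΩcard.symm
        _ = (Ω.image Ψ).card := (Finset.card_image_of_injOn hΨinj).symm
        _ ≤ M.powerset.card := Finset.card_le_card hΨpow
        _ = 2 ^ M.card := Finset.card_powerset M
    rw [hMc] at h1
    exact (Nat.pow_le_pow_iff_right one_lt_two).1 h1
  have hmueq : matchNum G = indepNumF G := le_antisymm (matchNum_le_indepNum hKE) hle
  -- Ψ is onto the powerset of M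
  have hΨsurj : Ω.image Ψ = M.powerset := by
    apply Finset.eq_of_subset_of_card_le hΨpow
    rw [Finset.card_powerset, Finset.card_image_of_injOn hΨinj, hΩcard, hMc, hmueq]
  -- M covers every vertex
  have hMcov : ∀ v : V, ∃ e ∈ M, v ∈ e := by
    have hC : M.biUnion (fun e => {einf e, esup e}) = Finset.univ := by
      apply Finset.eq_of_subset_of_card_le (Finset.subset_univ _)
      rw [Finset.card_univ, Finset.card_biUnion (by
        intro e he e' he' hne
        rw [Function.onFun, Finset.disjoint_left]
        intro x hx hx'
        have h1 : x ∈ e := by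
          rcases Finset.mem_insert.1 hx with rfl | h
          · exact einf_mem e
          · rw [Finset.mem_singleton.1 h]; exact esup_mem e
        have h2 : x ∈ e' := by
          rcases Finset.mem_insert.1 hx' with rfl | h
          · exact einf_mem e'
          · rw [Finset.mem_singleton.1 h]; exact esup_mem e'
        exact hM.2 e he e' he' hne x h1 h2)]
      have hcard2 : ∀ e ∈ M, ({einf e, esup e} : Finset V).card = 2 := by
        intro e he
        rw [Finset.card_insert_of_notMem (by
          rw [Finset.mem_singleton]
          exact einf_ne_esup_of_edge (hM.1 e he)), Finset.card_singleton]
      rw [Finset.sum_congr rfl hcard2, Finset.sum_const, smul_eq_mul, hMc, hmueq]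
      omega
    intro v
    have : v ∈ M.biUnion (fun e => {einf e, esup e}) := hC ▸ Finset.mem_univ v
    obtain ⟨e, he, hve⟩ := Finset.mem_biUnion.1 this
    refine ⟨e, he, ?_⟩
    rcases Finset.mem_insert.1 hve with rfl | h
    · exact einf_mem e
    · rw [Finset.mem_singleton.1 h]; exact esup_mem e
  -- no edges between distinct matching edges
  have hnocross : ∀ e ∈ M, ∀ e' ∈ M, e ≠ e' → ∀ x ∈ e, ∀ y ∈ e', ¬ G.Adj x y := by
    intro e he e' he' hne x hx y hy hadj
    set B : Finset (Sym2 V) :=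
      M.filter (fun d => (d = e ∧ x = einf e) ∨ (d = e' ∧ y = einf e')) with hBdef
    have hBpow : B ∈ M.powerset := Finset.mem_powerset.2 (Finset.filter_subset _ _)
    rw [← hΨsurj] at hBpow
    obtain ⟨S, hSm, hSB⟩ := Finset.mem_image.1 hBpow
    rw [hmemΩ] at hSm
    have heB : e ∈ B ↔ x = einf e := by
      rw [hBdef, Finset.mem_filter]
      constructor
      · rintro ⟨-, ⟨-, h⟩ | ⟨h, -⟩⟩
        · exact h
        · exact absurd h hne
      · intro h; exact ⟨he, Or.inl ⟨rfl, h⟩⟩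
    have he'B : e' ∈ B ↔ y = einf e' := by
      rw [hBdef, Finset.mem_filter]
      constructor
      · rintro ⟨-, ⟨h, -⟩ | ⟨-, h⟩⟩
        · exact absurd h.symm hne
        · exact h
      · intro h; exact ⟨he', Or.inr ⟨rfl, h⟩⟩
    have hkey : ∀ d ∈ M, ∀ z ∈ d, (d ∈ B ↔ z = einf d) → z ∈ S := by
      intro d hd z hz hiff
      by_cases hzinf : z = einf d
      · have : d ∈ Ψ S := hSB.symm ▸ hiff.2 hzinf
        exact hzinf ▸ (Finset.mem_filter.1 this).2
      · have hzsup : z = esup d := by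
          rcases (mem_iff_einf_esup d z).1 hz with h | h
          · exact absurd h hzinf
          · exact h
        have hdB : d ∉ B := fun hmem => hzinf (hiff.1 hmem)
        rw [← hSB] at hdB
        have hinf : einf d ∉ S := fun hmem => hdB (Finset.mem_filter.2 ⟨hd, hmem⟩)
        rcases hone S hSm d hd with ⟨h1, -⟩ | ⟨-, h2⟩
        · exact absurd h1 hinf
        · exact hzsup ▸ h2
    exact hSm.1 (hkey e he x hx heB) (hkey e' he' y hy he'B) hadj
  -- conclude unique neighbors
  intro v
  obtain ⟨e, he, hve⟩ := hMcov v
  have hvcase := (mem_iff_einf_esup e v).1 hve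
  set w : V := if v = einf e then esup e else einf e with hwdef
  have hwe : w ∈ e := by
    rw [hwdef]; split
    · exact esup_mem e
    · exact einf_mem e
  have hvw : v ≠ w := by
    have hne := einf_ne_esup_of_edge (hM.1 e he)
    rw [hwdef]
    split
    · rename_i h'
      rw [h']; exact hne
    · rename_i h'
      intro hc
      rcases hvcase with h | h
      · exact h' h
      · rw [h] at hc; exact hne hc.symm
  refine ⟨w, adj_of_mem_mem (hM.1 e he) hve hwe hvw, ?_⟩
  intro z hz
  obtain ⟨e', he', hze'⟩ := hMcov z
  have hee' : e' = e := by
    by_contra hne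
    exact hnocross e he e' he' (fun h => hne h.symm) v hve z hze' hz
  subst hee'
  have hzv : z ≠ v := fun h => G.irrefl (h ▸ hz)
  rw [hwdef]
  split
  · rename_i h'
    rcases (mem_iff_einf_esup e' z).1 hze' with h | h
    · exact absurd (h.trans h'.symm) hzv
    · exact h
  · rename_i h'
    have hvsup : v = esup e' := by
      rcases hvcase with h | h
      · exact absurd h h'
      · exact h
    rcases (mem_iff_einf_esup e' z).1 hze' with h | h
    · exact h
    · exact absurd (h.trans hvsup.symm) hzv

/-- For a König–Egerváry graph the five conditions are equivalent. -/
theorem stmt15 (G : SimpleGraph V)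
    (hKE : indepNumF G + matchNum G = Fintype.card V) :
    List.TFAE
      [∃ S : Finset V, isMaxIndep G S ∧ ∀ v ∈ S, IsShedding G v,
       {S : Finset V | isMaxIndep G S}.ncard = 2 ^ indepNumF G,
       ∀ v : V, IsShedding G v,
       ∀ S : Finset V, isMaxIndep G S → ∀ v ∈ S, IsShedding G v,
       Nonempty (G ≃g copiesK2 (indepNumF G))] := by
  classical
  letI : LinearOrder V := LinearOrder.lift' (Fintype.equivFin V) (Fintype.equivFin V).injective
  tfae_have 1 → 5 := by
    rintro ⟨S, hS, hshed⟩
    obtain ⟨f, R, hf1, hf2, hR⟩ := uniqueNbr_setup (uniqueNbr_of_shedMaxIndep hKE hS hshed)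
    rw [indepNum_eq_R hf1 hf2 hR]
    exact ⟨isoCopies hf1 hf2 hR⟩
  tfae_have 2 → 5 := by
    intro h2
    obtain ⟨f, R, hf1, hf2, hR⟩ := uniqueNbr_setup (uniqueNbr_of_count hKE h2)
    rw [indepNum_eq_R hf1 hf2 hR]
    exact ⟨isoCopies hf1 hf2 hR⟩
  tfae_have 5 → 2 := by
    rintro ⟨ψ⟩
    obtain ⟨f, R, hf1, hf2, hR⟩ := uniqueNbr_setup (uniqueNbr_of_iso ψ)
    exact ncard_maxIndep hf1 hf2 hR
  tfae_have 5 → 3 := by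
    rintro ⟨ψ⟩ v
    obtain ⟨f, R, hf1, hf2, hR⟩ := uniqueNbr_setup (uniqueNbr_of_iso ψ)
    exact shed_of_uniqueNbr hf1 hf2 v
  tfae_have 3 → 4 := by
    intro h S _ v _
    exact h v
  tfae_have 4 → 1 := by
    intro h
    obtain ⟨S, hS⟩ := exists_maxIndep G
    exact ⟨S, hS, h S hS⟩
  tfae_finish
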